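/- arXiv:1005.2358 — 3 statements merged into one kernel-verified Lean document; each statement's English description precedes it below -/
import Mathlib

section
/- For density matrices ρ, σ with σ positive definite, the squared trace distance is bounded by the Bures χ²-divergence: ‖ρ - σ‖₁² ≤ ⟨ρ - σ, Ω_Bures(ρ - σ)⟩, where Ω_Bures is the inverse of X ↦ (σX + Xσ)/2. -/
open Matrix
open scoped ComplexOrder

lemma trace_re_nonneg_of_posSemidef {d : ℕ} {A : Matrix (Fin d) (Fin d) ℂ}
    (hA : A.PosSemidef) : 0 ≤ A.trace.re := by
  have h : ∀ i, 0 ≤ (A i i).re := by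
    intro i
    have h0 := hA.diag_nonneg (i := i)
    rw [Complex.nonneg_iff] at h0
    exact h0.1
  simp only [Matrix.trace, Matrix.diag, Complex.re_sum]
  exact Finset.sum_nonneg fun i _ => h i

section cd
variable {d : ℕ} (V : Matrix (Fin d) (Fin d) ℂ)

/-- `V * diagonal f * Vᴴ` for a real function `f`. -/
noncomputable def cd (f : Fin d → ℝ) : Matrix (Fin d) (Fin d) ℂ :=
  V * diagonal (fun i => (f i : ℂ)) * star V

lemma cd_mul (hVV' : star V * V = 1) (f g : Fin d → ℝ) :
    cd V f * cd V g = cd V (fun i => f i * g i) := by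
  calc cd V f * cd V g
      = V * (diagonal (fun i => (f i : ℂ)) * (star V * V) * diagonal (fun i => (g i : ℂ))) * star V := by
        unfold cd; noncomm_ring
    _ = cd V (fun i => f i * g i) := by
        rw [hVV', mul_one, diagonal_mul_diagonal]
        unfold cd
        push_cast
        rfl

lemma cd_trace (hVV' : star V * V = 1) (f : Fin d → ℝ) :
    (cd V f).trace = ∑ i, (f i : ℂ) := by
  unfold cd
  rw [trace_mul_cycle, hVV', one_mul, trace_diagonal]

lemma cd_herm (f : Fin d → ℝ) : (cd V f)ᴴ = cd V f := by
  have hf : (star fun i => ((f i : ℂ))) = fun i => ((f i : ℂ)) :=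
    funext fun i => Complex.conj_ofReal (f i)
  unfold cd
  rw [star_eq_conjTranspose, conjTranspose_mul, conjTranspose_mul, diagonal_conjTranspose, hf,
    conjTranspose_conjTranspose, mul_assoc]

lemma cd_psd (f : Fin d → ℝ) (hf : ∀ i, 0 ≤ f i) : (cd V f).PosSemidef := by
  have hdg : (diagonal (fun i => ((f i : ℂ)))).PosSemidef :=
    posSemidef_diagonal_iff.mpr fun i => by
      rw [Complex.nonneg_iff]; simp [hf i]
  have := hdg.conjTranspose_mul_mul_same (star V)
  rwa [star_eq_conjTranspose, conjTranspose_conjTranspose, ← star_eq_conjTranspose] at this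

lemma cd_one (hVV : V * star V = 1) : cd V (fun _ => 1) = 1 := by
  unfold cd
  simp [hVV]

end cd

lemma sqrt_aux {d : ℕ} (Δ B : Matrix (Fin d) (Fin d) ℂ) (hB : B.PosSemidef)
    (hsq : B * B = Δᴴ * Δ) :
    ((Matrix.posSemidef_conjTranspose_mul_self Δ).1.eigenvectorUnitary.1 *
      diagonal (((↑) : ℝ → ℂ) ∘ Real.sqrt ∘ (Matrix.posSemidef_conjTranspose_mul_self Δ).1.eigenvalues) *
      (star (Matrix.posSemidef_conjTranspose_mul_self Δ).1.eigenvectorUnitary :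
        Matrix (Fin d) (Fin d) ℂ)) = B := by
  open scoped MatrixOrder in
  have P := Matrix.posSemidef_conjTranspose_mul_self Δ
  have e1 : CFC.sqrt (Δᴴ * Δ) = B :=
    CFC.sqrt_unique hsq (Matrix.nonneg_iff_posSemidef.mpr hB)
  rw [← e1, CFC.sqrt_eq_cfc, cfc_nnreal_eq_real _ (Δᴴ * Δ) (Matrix.nonneg_iff_posSemidef.mpr P),
    P.1.cfc_eq, IsHermitian.cfc, Unitary.conjStarAlgAut_apply]
  congr 3
  funext i
  simp [Real.coe_toNNReal', max_eq_left (P.eigenvalues_nonneg i)]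

/-- The trace norm `‖A‖₁ = tr √(A†A)` of a complex matrix. -/
noncomputable def traceNorm {d : ℕ} (A : Matrix (Fin d) (Fin d) ℂ) : ℝ :=
  (((Matrix.posSemidef_conjTranspose_mul_self A).1.eigenvectorUnitary.1 *
      diagonal (((↑) : ℝ → ℂ) ∘ Real.sqrt ∘ (Matrix.posSemidef_conjTranspose_mul_self A).1.eigenvalues) *
      (star (Matrix.posSemidef_conjTranspose_mul_self A).1.eigenvectorUnitary :
        Matrix (Fin d) (Fin d) ℂ)).trace).re

/-- For density matrices `ρ, σ` with `σ` positive definite, the squared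
trace distance is bounded by the Bures χ²-divergence:
`‖ρ - σ‖₁² ≤ ⟨ρ - σ, Ω_Bures(ρ - σ)⟩`, where `Y = Ω_Bures(ρ - σ)` is the unique
solution of `σY + Yσ = 2(ρ - σ)`. -/
theorem traceDist_sq_le_chi_sq_bures (d : ℕ) (ρ σ Y : Matrix (Fin d) (Fin d) ℂ)
    (hρ : ρ.PosSemidef) (hρtr : ρ.trace = 1)
    (hσ : σ.PosDef) (hσtr : σ.trace = 1)
    (hY : σ * Y + Y * σ = (2 : ℂ) • (ρ - σ)) :
    traceNorm (ρ - σ) ^ 2 ≤ (((ρ - σ)ᴴ * Y).trace).re := by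
  classical
  set Δ := ρ - σ with hΔdef
  have hΔ : Δ.IsHermitian := hρ.1.sub hσ.1
  set V : Matrix (Fin d) (Fin d) ℂ := ↑(hΔ.eigenvectorUnitary) with hVdef
  set lam := hΔ.eigenvalues with hlamdef
  have hVV : V * star V = 1 := mem_unitaryGroup_iff.mp hΔ.eigenvectorUnitary.2
  have hVV' : star V * V = 1 := mem_unitaryGroup_iff'.mp hΔ.eigenvectorUnitary.2
  have hspec : Δ = cd V lam := hΔ.spectral_theorem
  -- sign function
  set s : Fin d → ℝ := fun i => if lam i < 0 then -1 else 1 with hs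
  have hs1 : (fun i => s i * s i) = fun _ => (1:ℝ) := by
    funext i; rw [hs]; dsimp only; split <;> norm_num
  have hsl : (fun i => s i * lam i) = fun i => |lam i| := by
    funext i; rw [hs]; dsimp only; split
    · rw [abs_of_neg ‹_›]; ring
    · rw [abs_of_nonneg (not_lt.mp ‹_›)]; ring
  set U := cd V s with hU
  have hU2 : U * U = 1 := by
    rw [hU, cd_mul V hVV', hs1, cd_one V hVV]
  have hUΔ : U * Δ = cd V (fun i => |lam i|) := by
    rw [hU, hspec, cd_mul V hVV', hsl]
  -- trace norm computation
  have hsqrt : ((Matrix.posSemidef_conjTranspose_mul_self Δ).1.eigenvectorUnitary.1 *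
      diagonal (((↑) : ℝ → ℂ) ∘ Real.sqrt ∘ (Matrix.posSemidef_conjTranspose_mul_self Δ).1.eigenvalues) *
      (star (Matrix.posSemidef_conjTranspose_mul_self Δ).1.eigenvectorUnitary :
        Matrix (Fin d) (Fin d) ℂ)) = cd V (fun i => |lam i|) := by
    refine sqrt_aux Δ _ (cd_psd V _ fun i => abs_nonneg _) ?_
    rw [cd_mul V hVV', hΔ.eq, hspec, cd_mul V hVV']
    have habs : (fun i => |lam i| * |lam i|) = fun i => lam i * lam i :=
      funext fun i => abs_mul_abs_self _
    rw [habs]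
  have htn : traceNorm Δ = ∑ i, |lam i| := by
    rw [traceNorm, hsqrt, cd_trace V hVV', Complex.re_sum]
    simp
  have hb : ((U * Δ).trace).re = traceNorm Δ := by
    rw [hUΔ, cd_trace V hVV', htn, Complex.re_sum]
    simp
  -- symmetrized Y
  set Z := (1/2 : ℂ) • (Y + Yᴴ) with hZ
  have hσh : σᴴ = σ := hσ.1
  have hYc : σ * Yᴴ + Yᴴ * σ = (2:ℂ) • Δ := by
    have h1 := congrArg conjTranspose hY
    rw [conjTranspose_add, conjTranspose_mul, conjTranspose_mul, hσh, conjTranspose_smul,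
      conjTranspose_sub, hρ.1.eq, hσ.1.eq] at h1
    rw [← hΔdef] at h1
    rw [add_comm] at h1
    convert h1 using 2
    norm_num
  have hZherm : Zᴴ = Z := by
    rw [hZ, conjTranspose_smul, conjTranspose_add, conjTranspose_conjTranspose]
    rw [add_comm Yᴴ Y]
    congr 1
    norm_num
  have hZeq : σ * Z + Z * σ = (2:ℂ) • Δ := by
    have h5 : σ * Z + Z * σ = (1/2 : ℂ) • ((σ * Y + Y * σ) + (σ * Yᴴ + Yᴴ * σ)) := by
      rw [hZ]
      simp only [smul_add, mul_smul_comm, smul_mul_assoc, mul_add, add_mul]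
      abel
    rw [h5, hY, hYc]
    module
  -- a and its properties
  have hZsZ : (Δ * Z).trace = (Z * σ * Z).trace := by
    have h2 : (2:ℂ) • (Δ * Z) = σ * Z * Z + Z * σ * Z := by
      rw [← smul_mul_assoc, ← hZeq, add_mul]
    have h3 := congrArg Matrix.trace h2
    rw [trace_smul, trace_add, trace_mul_cycle σ Z Z] at h3
    have h4 : (2:ℂ) * (Δ * Z).trace = 2 * (Z * σ * Z).trace := by
      simpa [smul_eq_mul, two_mul] using h3
    exact mul_left_cancel₀ two_ne_zero h4
  set a : ℝ := ((Δ * Z).trace).re with ha'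
  have hZsZpsd : (Z * σ * Z).PosSemidef := by
    have := hσ.posSemidef.conjTranspose_mul_mul_same Z
    rwa [hZherm] at this
  have haa : 0 ≤ a := by
    rw [ha', hZsZ]
    exact trace_re_nonneg_of_posSemidef hZsZpsd
  set b : ℝ := ((U * Δ).trace).re with hb'
  -- goal reduction
  have hgoal : ((Δᴴ * Y).trace).re = a := by
    rw [hΔ.eq, ha']
    have e1 : Δ * Z = (1/2 : ℂ) • (Δ * Y + Δ * Yᴴ) := by
      rw [hZ, mul_smul_comm, mul_add]
    have e2 : (Δ * Yᴴ).trace = star ((Δ * Y).trace) := by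
      have e3 : Δ * Yᴴ = (Y * Δ)ᴴ := by rw [conjTranspose_mul, hΔ.eq]
      rw [e3, trace_conjTranspose, trace_mul_comm]
    rw [e1, trace_smul, trace_add, e2]
    have e4 : ((Δ * Y).trace + star ((Δ * Y).trace)) = ((2 * ((Δ * Y).trace).re : ℝ) : ℂ) := by
      rw [show (star ((Δ * Y).trace)) = (starRingEnd ℂ) ((Δ * Y).trace) from rfl,
        Complex.add_conj]
    rw [e4]
    simp [Complex.mul_re]
  rw [hgoal, ← hb]
  -- key quadratic inequality
  have key : ∀ t : ℝ, 0 ≤ a * (t * t) + (-2 * b) * t + 1 := by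
    intro t
    set W := U - (t:ℂ) • Z with hW
    have hWherm : Wᴴ = W := by
      rw [hW, conjTranspose_sub, conjTranspose_smul, hZherm, hU, cd_herm]
      congr 2
      simp
    have hWpsd : (W * σ * W).PosSemidef := by
      have := hσ.posSemidef.conjTranspose_mul_mul_same W
      rwa [hWherm] at this
    have hre : 0 ≤ ((W * σ * W).trace).re := trace_re_nonneg_of_posSemidef hWpsd
    have hexp : W * σ * W = U * σ * U - (t:ℂ) • (U * σ * Z) - (t:ℂ) • (Z * σ * U)
        + ((t:ℂ) * (t:ℂ)) • (Z * σ * Z) := by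
      rw [hW]
      simp only [sub_mul, mul_sub, smul_sub, smul_add, smul_mul_assoc, mul_smul_comm, smul_smul]
      abel
    have t1 : (U * σ * U).trace = 1 := by
      rw [trace_mul_cycle U σ U, hU2, one_mul, hσtr]
    have t2 : (U * σ * Z).trace + (Z * σ * U).trace = (2:ℂ) * (U * Δ).trace := by
      rw [trace_mul_cycle Z σ U]
      rw [mul_assoc, mul_assoc, ← trace_add, ← mul_add, hZeq, mul_smul_comm, trace_smul]
      simp [smul_eq_mul]
    have htrW : ((W * σ * W).trace)
        = 1 - (t:ℂ) * ((U * σ * Z).trace + (Z * σ * U).trace)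
          + ((t:ℂ) * (t:ℂ)) * (Z * σ * Z).trace := by
      rw [hexp, trace_add, trace_sub, trace_sub, trace_smul, trace_smul, trace_smul, t1]
      push_cast [smul_eq_mul]
      ring
    rw [htrW, t2, ← hZsZ] at hre
    simp only [Complex.add_re, Complex.sub_re, Complex.one_re, Complex.mul_re, Complex.mul_im,
      Complex.re_ofNat, Complex.im_ofNat, Complex.ofReal_re, Complex.ofReal_im, ← hb', ← ha',
      mul_zero, zero_mul, sub_zero, add_zero, zero_add] at hre
    nlinarith [hre]
  have hd := discrim_le_zero key
  rw [discrim] at hd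
  nlinarith [hd]
end

section
/- For a unital quantum channel T on M_d with symmetrization S = T*∘T, the spectral gap Δ = 1 - λ₁ (λ₁ the second largest eigenvalue of S) satisfies Δ ≤ 2h, where h = min over orthogonal projections Π with tr Π ≤ d/2 of tr[(𝟙-Π)S(Π)]/tr[Π] is the quantum Cheeger constant. -/
open Matrix
open scoped ComplexOrder

/-- A completely positive trace-preserving map (quantum channel), presented by
a Kraus decomposition `T(X) = ∑ μ, K μ * X * (K μ)ᴴ` with `∑ μ, (K μ)ᴴ * K μ = 1`. -/
def IsCPTP {d : ℕ} (T : Matrix (Fin d) (Fin d) ℂ →ₗ[ℂ] Matrix (Fin d) (Fin d) ℂ) : Prop :=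
  ∃ (m : ℕ) (K : Fin m → Matrix (Fin d) (Fin d) ℂ),
    (∀ X, T X = ∑ μ, K μ * X * (K μ)ᴴ) ∧ (∑ μ, (K μ)ᴴ * K μ = 1)

lemma trace_ctm {n : Type*} [Fintype n] (A : Matrix n n ℂ) :
    (Aᴴ * A).trace = ∑ j, ∑ i, (Complex.normSq (A i j) : ℂ) := by
  simp [Matrix.trace, Matrix.mul_apply, Matrix.diag, Matrix.conjTranspose_apply,
    ← Complex.normSq_eq_conj_mul_self]

lemma trace_ctm_re {n : Type*} [Fintype n] (A : Matrix n n ℂ) :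
    ((Aᴴ * A).trace).re = ∑ j, ∑ i, Complex.normSq (A i j) := by
  rw [trace_ctm]
  simp [Complex.re_sum]

lemma trace_ctm_re_nonneg {n : Type*} [Fintype n] (A : Matrix n n ℂ) :
    0 ≤ ((Aᴴ * A).trace).re := by
  rw [trace_ctm_re]
  exact Finset.sum_nonneg fun j _ => Finset.sum_nonneg fun i _ => Complex.normSq_nonneg _

lemma ctm_eq_zero {n : Type*} [Fintype n] (A : Matrix n n ℂ)
    (h : (Aᴴ * A).trace = 0) : A = 0 := by
  have h2 : ∑ j, ∑ i, Complex.normSq (A i j) = 0 := by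
    rw [← trace_ctm_re, h]; rfl
  ext i j
  have h3 := (Finset.sum_eq_zero_iff_of_nonneg (fun j _ => Finset.sum_nonneg
    (fun i _ => Complex.normSq_nonneg _))).mp h2 j (Finset.mem_univ j)
  have h4 := (Finset.sum_eq_zero_iff_of_nonneg (fun i _ => Complex.normSq_nonneg _)).mp
    h3 i (Finset.mem_univ i)
  simpa using Complex.normSq_eq_zero.mp h4

lemma trace_mul_psd_re_nonneg {n : Type*} [Fintype n] (M N : Matrix n n ℂ) :
    0 ≤ ((Mᴴ * M * (Nᴴ * N)).trace).re := by
  have h1 : Mᴴ * M * (Nᴴ * N) = Mᴴ * (M * Nᴴ * N) := by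
    simp only [Matrix.mul_assoc]
  rw [h1, Matrix.trace_mul_comm]
  have h2 : M * Nᴴ * N * Mᴴ = (N * Mᴴ)ᴴ * (N * Mᴴ) := by
    simp only [Matrix.conjTranspose_mul, Matrix.conjTranspose_conjTranspose,
      Matrix.mul_assoc]
  rw [h2]
  exact trace_ctm_re_nonneg _

lemma cheeger_arith (l₁ r t dd : ℝ) (hdd : 0 < dd) (hr : 0 < r) (htr : r ≤ dd / 2)
    (hnn : 0 ≤ r - t) (hineq : t - r ^ 2 / dd ≤ l₁ * (r - r ^ 2 / dd)) :
    1 - l₁ ≤ 2 * ((r - t) / r) := by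
  rcases le_or_gt (1 - l₁) 0 with hc | hc
  · have : 0 ≤ 2 * ((r - t) / r) := mul_nonneg (by norm_num) (div_nonneg hnn hr.le)
    linarith
  · have ha : r ^ 2 / dd ≤ r / 2 := by
      rw [div_le_div_iff₀ hdd (by norm_num : (0:ℝ) < 2)]
      nlinarith
    have key : (1 - l₁) * (r / 2) ≤ r - t := by
      have h2 : (1 - l₁) * (r - r ^ 2 / dd) ≤ r - t := by nlinarith
      nlinarith
    rw [show 2 * ((r - t) / r) = (2 * (r - t)) / r by ring, le_div_iff₀ hr]
    nlinarith

/-- Cheeger upper bound: For a unital quantum channel `T` on `M_d` with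
symmetrization `S = T* ∘ T` and `l₁` the second largest eigenvalue of `S` (so that
`⟨X, S(X)⟩ ≤ l₁ ⟨X,X⟩` on the traceless Hermitian subspace, orthogonal to the top
eigenvector `𝟙`), the spectral gap `Δ = 1 - l₁` satisfies `Δ ≤ 2h`, where
`h` is the quantum Cheeger constant `min_Pr tr[(𝟙-Pr)S(Pr)]/tr[Pr]` over orthogonal
projections with `tr Pr ≤ d/2`; i.e. the bound holds against every such projection. -/
theorem quantum_cheeger_upper_bound (d : ℕ) (hd : 0 < d)
    (T Tadj : Matrix (Fin d) (Fin d) ℂ →ₗ[ℂ] Matrix (Fin d) (Fin d) ℂ)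
    (l₁ : ℝ)
    (hT : IsCPTP T) (hunital : T 1 = 1)
    (hadj : ∀ X Y, ((T X)ᴴ * Y).trace = (Xᴴ * Tadj Y).trace)
    (hl : ∀ X : Matrix (Fin d) (Fin d) ℂ, X.IsHermitian → X.trace = 0 →
      ((Xᴴ * Tadj (T X)).trace).re ≤ l₁ * ((Xᴴ * X).trace).re) :
    ∀ Pr : Matrix (Fin d) (Fin d) ℂ, Pr * Pr = Pr → Prᴴ = Pr → Pr ≠ 0 →
      (Pr.trace).re ≤ (d : ℝ) / 2 →
      1 - l₁ ≤ 2 * ((((1 - Pr) * Tadj (T Pr)).trace).re / (Pr.trace).re) := by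
  intro Pr hidem hherm hne htr
  obtain ⟨m, K, hK, hsum⟩ := hT
  have hdC : (d : ℂ) ≠ 0 := Nat.cast_ne_zero.mpr hd.ne'
  have hdR : (0 : ℝ) < d := Nat.cast_pos.mpr hd
  -- T is trace preserving
  have hTtr : ∀ X : Matrix (Fin d) (Fin d) ℂ, (T X).trace = X.trace := by
    intro X
    rw [hK, Matrix.trace_sum]
    calc ∑ μ, (K μ * X * (K μ)ᴴ).trace = ∑ μ, ((K μ)ᴴ * (K μ * X)).trace := by
          refine Finset.sum_congr rfl fun μ _ => ?_
          rw [Matrix.trace_mul_comm]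
          
      _ = ((∑ μ, (K μ)ᴴ * K μ) * X).trace := by
          rw [Finset.sum_mul, Matrix.trace_sum]
          exact Finset.sum_congr rfl fun μ _ => by rw [Matrix.mul_assoc]
      _ = X.trace := by rw [hsum, one_mul]
  -- Tadj 1 = 1
  have hkey : ∀ X : Matrix (Fin d) (Fin d) ℂ, (Xᴴ * (Tadj 1 - 1)).trace = 0 := by
    intro X
    have h1 := hadj X 1
    rw [mul_one] at h1
    rw [Matrix.mul_sub, Matrix.trace_sub, mul_one, ← h1,
      Matrix.trace_conjTranspose, Matrix.trace_conjTranspose, hTtr, sub_self]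
  have hadj1 : Tadj 1 = 1 := by
    have := hkey (Tadj 1 - 1)
    have h0 := ctm_eq_zero _ this
    exact sub_eq_zero.mp h0
  set A : Matrix (Fin d) (Fin d) ℂ := Tadj (T Pr) with hA
  -- trace of A
  have htrA : A.trace = Pr.trace := by
    have h1 := hadj 1 (T Pr)
    rw [hunital, Matrix.conjTranspose_one, one_mul, one_mul] at h1
    rw [hA, ← h1, hTtr]
  -- trace of Pr is a positive real
  have hstarc : (starRingEnd ℂ) Pr.trace = Pr.trace := by
    have h := Matrix.trace_conjTranspose Pr
    rw [hherm] at h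
    exact h.symm
  have hcre : Pr.trace = ((Pr.trace).re : ℂ) := (Complex.conj_eq_iff_re.mp hstarc).symm
  have hPP : Prᴴ * Pr = Pr := by rw [hherm, hidem]
  have hrpos : 0 < (Pr.trace).re := by
    have h0 : 0 ≤ ((Prᴴ * Pr).trace).re := trace_ctm_re_nonneg Pr
    rw [hPP] at h0
    rcases h0.lt_or_eq with h | h
    · exact h
    · exfalso
      apply hne
      apply ctm_eq_zero
      rw [hPP, hcre, ← h]
      simp
  set r : ℝ := (Pr.trace).re with hr
  -- nonnegativity of the overlap term
  have hQ : (1 - Pr)ᴴ = 1 - Pr := by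
    rw [Matrix.conjTranspose_sub, Matrix.conjTranspose_one, hherm]
  have hQidem : (1 - Pr) * (1 - Pr) = 1 - Pr := by
    rw [Matrix.mul_sub, Matrix.sub_mul, Matrix.sub_mul, hidem]
    simp
  have hnn : 0 ≤ (((1 - Pr) * A).trace).re := by
    have h1 : (((1 - Pr) * A).trace) = ((T (1 - Pr))ᴴ * T Pr).trace := by
      rw [hadj, hQ, hA]
    rw [h1, hK (1 - Pr), hK Pr]
    rw [Matrix.conjTranspose_sum, Finset.sum_mul, Matrix.trace_sum, Complex.re_sum]
    refine Finset.sum_nonneg fun ν _ => ?_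
    rw [Finset.mul_sum, Matrix.trace_sum, Complex.re_sum]
    refine Finset.sum_nonneg fun μ _ => ?_
    have e1 : (K ν * (1 - Pr) * (K ν)ᴴ)ᴴ = ((1 - Pr) * (K ν)ᴴ)ᴴ * ((1 - Pr) * (K ν)ᴴ) := by
      simp only [Matrix.conjTranspose_mul, Matrix.conjTranspose_conjTranspose, hQ,
        Matrix.mul_assoc]
      rw [← Matrix.mul_assoc (1 - Pr) (1 - Pr) ((K ν)ᴴ), hQidem]
    have e2 : K μ * Pr * (K μ)ᴴ = (Pr * (K μ)ᴴ)ᴴ * (Pr * (K μ)ᴴ) := by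
      simp only [Matrix.conjTranspose_mul, Matrix.conjTranspose_conjTranspose, hherm,
        Matrix.mul_assoc]
      rw [← Matrix.mul_assoc Pr Pr ((K μ)ᴴ), hidem]
    rw [e1, e2]
    exact trace_mul_psd_re_nonneg _ _
  -- the test operator
  set z : ℂ := Pr.trace / d with hz
  set X : Matrix (Fin d) (Fin d) ℂ := Pr - z • 1 with hX
  have hzstar : star z = z := by
    simp [hz, Complex.star_def, map_div₀, hstarc]
  have hXherm : X.IsHermitian := by
    unfold Matrix.IsHermitian
    rw [hX, Matrix.conjTranspose_sub, hherm, Matrix.conjTranspose_smul,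
      Matrix.conjTranspose_one, hzstar]
  have hXtr : X.trace = 0 := by
    rw [hX, Matrix.trace_sub, Matrix.trace_smul, Matrix.trace_one, Fintype.card_fin, hz, smul_eq_mul]
    field_simp
    simp
  have hTTX : Tadj (T X) = A - z • 1 := by
    rw [hX, map_sub, LinearMap.map_smul, map_sub, LinearMap.map_smul, hunital, hadj1, hA]
  have hXc : Xᴴ = X := hXherm
  -- compute the two traces
  have e1 : (Xᴴ * Tadj (T X)).trace = (Pr * A).trace - Pr.trace ^ 2 / d := by
    rw [hXc, hTTX, hX]
    rw [Matrix.sub_mul, Matrix.mul_sub, Matrix.mul_sub, Matrix.smul_mul, Matrix.mul_smul,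
      Matrix.mul_smul, Matrix.trace_sub, Matrix.trace_sub, Matrix.trace_sub]
    simp only [Matrix.trace_smul, smul_eq_mul, mul_one, one_mul, Matrix.smul_mul,
      Matrix.trace_one, Fintype.card_fin, htrA, smul_smul]
    rw [hz]
    field_simp
    ring
  have e2 : (Xᴴ * X).trace = Pr.trace - Pr.trace ^ 2 / d := by
    rw [hXc, hX]
    rw [Matrix.sub_mul, Matrix.mul_sub, Matrix.mul_sub, Matrix.smul_mul, Matrix.mul_smul,
      Matrix.mul_smul, Matrix.trace_sub, Matrix.trace_sub, Matrix.trace_sub, hidem]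
    simp only [Matrix.trace_smul, smul_eq_mul, mul_one, one_mul, Matrix.smul_mul,
      Matrix.trace_one, Fintype.card_fin, smul_smul]
    rw [hz]
    field_simp
    ring
  have hineq := hl X hXherm hXtr
  rw [e1, e2] at hineq
  -- pass to real parts
  set t : ℝ := ((Pr * A).trace).re with ht
  have hre1 : ((Pr * A).trace - Pr.trace ^ 2 / d).re = t - r ^ 2 / d := by
    rw [Complex.sub_re, ht]
    congr 1
    rw [hcre]
    norm_cast
  have hre2 : (Pr.trace - Pr.trace ^ 2 / d).re = r - r ^ 2 / d := by
    rw [Complex.sub_re]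
    congr 1
    rw [hcre]
    norm_cast
  rw [hre1, hre2] at hineq
  -- rewrite the goal trace
  have hgoal : (((1 - Pr) * A).trace).re = r - t := by
    rw [Matrix.sub_mul, one_mul, Matrix.trace_sub, Complex.sub_re, htrA]
  rw [hgoal]
  -- final real arithmetic
  rw [hgoal] at hnn
  clear_value t r X z A
  exact cheeger_arith l₁ r t d hdR hrpos htr hnn hineq
end

section
/- Monotonicity of the resolvent quadratic form under channels: for a quantum channel T, positive definite σ, ρ ∈ M_d, s > 0, and any A ∈ M_d: tr[A† (R_σ + s L_ρ)^{-1}(A)] ≥ tr[T(A)† (R_{T(σ)} + s L_{T(ρ)})^{-1}(T(A))], where L_X(Y)=XY, R_X(Y)=YX. -/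
open Matrix
open scoped ComplexOrder

section Aux

variable {d m : ℕ}

open scoped MatrixOrder

lemma trace_re_nonneg_of_posSemidef_s19 {M : Matrix (Fin d) (Fin d) ℂ} (h : M.PosSemidef) :
    0 ≤ M.trace.re := by
  have hdiag : ∀ i, 0 ≤ (M i i).re := by
    intro i
    have h2 := h.dotProduct_mulVec_nonneg (Pi.single i 1)
    have he : (star (Pi.single i 1) ⬝ᵥ M *ᵥ Pi.single i 1 : ℂ) = M i i := by
      simp [mulVec_single, dotProduct, Pi.single_apply, apply_ite]
    rw [he] at h2
    exact (Complex.le_def.mp h2).1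
  have : M.trace.re = ∑ i, (M i i).re := by
    simp [Matrix.trace, Matrix.diag, Complex.re_sum]
  rw [this]
  exact Finset.sum_nonneg fun i _ => hdiag i

lemma trace_mul_psd_re_nonneg_s19 {P Q : Matrix (Fin d) (Fin d) ℂ}
    (hP : P.PosSemidef) (hQ : Q.PosSemidef) : 0 ≤ ((P * Q).trace).re := by
  have hS : CFC.sqrt Q * CFC.sqrt Q = Q := CFC.sqrt_mul_sqrt_self Q hQ.nonneg
  have hH : (CFC.sqrt Q)ᴴ = CFC.sqrt Q := (CFC.sqrt_nonneg Q).posSemidef.isHermitian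
  have key : (P * Q).trace = ((CFC.sqrt Q)ᴴ * P * CFC.sqrt Q).trace := by
    rw [hH, Matrix.trace_mul_cycle, hS, trace_mul_comm]
  rw [key]
  exact trace_re_nonneg_of_posSemidef_s19 (hP.conjTranspose_mul_mul_same _)

lemma psd_sum (f : Fin m → Matrix (Fin d) (Fin d) ℂ) (h : ∀ i, (f i).PosSemidef) :
    (∑ i, f i).PosSemidef :=
  Finset.sum_induction f Matrix.PosSemidef (fun _ _ ha hb => ha.add hb)
    Matrix.PosSemidef.zero (fun i _ => h i)

lemma kadison_schwarz (K : Fin m → Matrix (Fin d) (Fin d) ℂ)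
    (hK : ∑ μ, (K μ)ᴴ * K μ = 1) (Y : Matrix (Fin d) (Fin d) ℂ) :
    ((∑ μ, (K μ)ᴴ * Yᴴ * Y * K μ) -
      (∑ μ, (K μ)ᴴ * Y * K μ)ᴴ * (∑ μ, (K μ)ᴴ * Y * K μ)).PosSemidef := by
  set Z : Matrix (Fin d) (Fin d) ℂ := ∑ μ, (K μ)ᴴ * Y * K μ with hZ
  have key : (∑ μ, (K μ)ᴴ * Yᴴ * Y * K μ) - Zᴴ * Z
      = ∑ μ, (Y * K μ - K μ * Z)ᴴ * (Y * K μ - K μ * Z) := by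
    have hZc : Zᴴ = ∑ μ, (K μ)ᴴ * Yᴴ * K μ := by
      rw [hZ, conjTranspose_sum]
      congr 1; funext μ
      simp [Matrix.mul_assoc]
    have expand : ∀ μ : Fin m, (Y * K μ - K μ * Z)ᴴ * (Y * K μ - K μ * Z)
        = (K μ)ᴴ * Yᴴ * Y * K μ - ((K μ)ᴴ * Yᴴ * K μ) * Z - Zᴴ * ((K μ)ᴴ * Y * K μ)
          + Zᴴ * ((K μ)ᴴ * K μ) * Z := by
      intro μ
      simp only [conjTranspose_sub, conjTranspose_mul, sub_mul, mul_sub]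
      noncomm_ring
    rw [Finset.sum_congr rfl (fun μ _ => expand μ)]
    simp only [Finset.sum_sub_distrib, Finset.sum_add_distrib, ← Finset.sum_mul,
      ← Finset.mul_sum, ← hZc, ← hZ]
    rw [hK, Matrix.mul_one]
    abel
  rw [key]
  exact psd_sum _ (fun μ => posSemidef_conjTranspose_mul_self _)

lemma re_trace_conjT (M : Matrix (Fin d) (Fin d) ℂ) : (Mᴴ.trace).re = (M.trace).re := by
  rw [Matrix.trace_conjTranspose]
  exact Complex.conj_re _

end Aux

set_option maxHeartbeats 2000000 in
/-- monotonicity of the resolvent quadratic form: for a quantum channel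
`T`, positive definite `σ, ρ`, `s > 0`, and any `A`: if `X = (R_σ + s L_ρ)⁻¹(A)`
(i.e. `Xσ + sρX = A`) and `Y = (R_{T(σ)} + s L_{T(ρ)})⁻¹(T(A))`
(i.e. `Y·T(σ) + s·T(ρ)·Y = T(A)`), then
`tr[A† (R_σ + sL_ρ)⁻¹(A)] ≥ tr[T(A)† (R_{T(σ)} + sL_{T(ρ)})⁻¹(T(A))]`. -/
theorem resolvent_quadratic_form_monotone (d : ℕ)
    (T : Matrix (Fin d) (Fin d) ℂ →ₗ[ℂ] Matrix (Fin d) (Fin d) ℂ)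
    (σ ρ : Matrix (Fin d) (Fin d) ℂ) (s : ℝ)
    (hT : IsCPTP T) (hσ : σ.PosDef) (hρ : ρ.PosDef) (hs : 0 < s) :
    ∀ A X Y : Matrix (Fin d) (Fin d) ℂ,
      X * σ + (s : ℂ) • (ρ * X) = A →
      Y * (T σ) + (s : ℂ) • ((T ρ) * Y) = T A →
      (((T A)ᴴ * Y).trace).re ≤ ((Aᴴ * X).trace).re := by
  obtain ⟨m, K, hTK, hK⟩ := hT
  intro A X Y hX hY
  set Z : Matrix (Fin d) (Fin d) ℂ := ∑ μ, (K μ)ᴴ * Y * K μ with hZ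
  have hσH : σᴴ = σ := hσ.isHermitian
  have hρH : ρᴴ = ρ := hρ.isHermitian
  have hσ'H : (T σ)ᴴ = T σ := by
    rw [hTK σ, conjTranspose_sum]
    exact Finset.sum_congr rfl fun μ _ => by simp [Matrix.mul_assoc, hσH]
  have hρ'H : (T ρ)ᴴ = T ρ := by
    rw [hTK ρ, conjTranspose_sum]
    exact Finset.sum_congr rfl fun μ _ => by simp [Matrix.mul_assoc, hρH]
  have hZc : Zᴴ = ∑ μ, (K μ)ᴴ * Yᴴ * K μ := by
    rw [hZ, conjTranspose_sum]
    exact Finset.sum_congr rfl fun μ _ => by simp [Matrix.mul_assoc]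
  -- PSD facts
  have hP1 : ((∑ μ, (K μ)ᴴ * Yᴴ * Y * K μ) - Zᴴ * Z).PosSemidef := kadison_schwarz K hK Y
  have hP2 : ((∑ μ, (K μ)ᴴ * Y * Yᴴ * K μ) - Z * Zᴴ).PosSemidef := by
    have h := kadison_schwarz K hK Yᴴ
    rw [← hZc] at h
    simpa using h
  have hI1 : 0 ≤ (((∑ μ, (K μ)ᴴ * Yᴴ * Y * K μ) * σ).trace).re - (((Zᴴ * Z) * σ).trace).re := by
    have h := trace_mul_psd_re_nonneg_s19 hP1 hσ.posSemidef
    rwa [sub_mul, Matrix.trace_sub, Complex.sub_re] at h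
  have hI2 : 0 ≤ (((∑ μ, (K μ)ᴴ * Y * Yᴴ * K μ) * ρ).trace).re - (((Z * Zᴴ) * ρ).trace).re := by
    have h := trace_mul_psd_re_nonneg_s19 hP2 hρ.posSemidef
    rwa [sub_mul, Matrix.trace_sub, Complex.sub_re] at h
  have hW1 : 0 ≤ ((((X - Z)ᴴ * (X - Z)) * σ).trace).re :=
    trace_mul_psd_re_nonneg_s19 (posSemidef_conjTranspose_mul_self _) hσ.posSemidef
  have hW2 : 0 ≤ ((((X - Z) * (X - Z)ᴴ) * ρ).trace).re :=
    trace_mul_psd_re_nonneg_s19 (posSemidef_self_mul_conjTranspose _) hρ.posSemidef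
  -- conjTransposes from the defining equations
  have hAH : Aᴴ = σ * Xᴴ + (s:ℂ) • (Xᴴ * ρ) := by
    rw [← hX]
    simp [conjTranspose_add, conjTranspose_smul, conjTranspose_mul, hσH, hρH,
      Complex.conj_ofReal]
  have hTAH : (T A)ᴴ = (T σ) * Yᴴ + (s:ℂ) • (Yᴴ * (T ρ)) := by
    rw [← hY]
    simp [conjTranspose_add, conjTranspose_smul, conjTranspose_mul, hσ'H, hρ'H,
      Complex.conj_ofReal]
  -- trace identities
  have E4 : (((T A)ᴴ * Y).trace) = ((Yᴴ*Y) * (T σ)).trace + (s:ℂ) * (((Y*Yᴴ) * (T ρ)).trace) := by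
    rw [hTAH, add_mul, smul_mul_assoc, Matrix.trace_add, Matrix.trace_smul, smul_eq_mul]
    congr 1
    · have h := Matrix.trace_mul_comm (T σ) (Yᴴ * Y)
      simp only [Matrix.mul_assoc] at h ⊢
      exact h
    · congr 1
      have h := Matrix.trace_mul_comm (Yᴴ * (T ρ)) Y
      simp only [Matrix.mul_assoc] at h ⊢
      exact h
  have E5 : ((Aᴴ * X).trace) = ((Xᴴ*X) * σ).trace + (s:ℂ) * (((X*Xᴴ) * ρ).trace) := by
    rw [hAH, add_mul, smul_mul_assoc, Matrix.trace_add, Matrix.trace_smul, smul_eq_mul]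
    congr 1
    · have h := Matrix.trace_mul_comm σ (Xᴴ * X)
      simp only [Matrix.mul_assoc] at h ⊢
      exact h
    · congr 1
      have h := Matrix.trace_mul_comm (Xᴴ * ρ) X
      simp only [Matrix.mul_assoc] at h ⊢
      exact h
  have E1 : (((T A)ᴴ * Y).trace) = ((Aᴴ * Z).trace) := by
    rw [hTK A, conjTranspose_sum, Finset.sum_mul, Matrix.trace_sum, hZ, Finset.mul_sum,
      Matrix.trace_sum]
    refine Finset.sum_congr rfl fun μ _ => ?_
    have h := Matrix.trace_mul_comm (K μ) (Aᴴ * ((K μ)ᴴ * Y))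
    simp only [conjTranspose_mul, conjTranspose_conjTranspose, Matrix.mul_assoc] at h ⊢
    exact h
  have E2 : (((Yᴴ*Y) * (T σ)).trace) = ((∑ μ, (K μ)ᴴ * Yᴴ * Y * K μ) * σ).trace := by
    rw [hTK σ, Finset.mul_sum, Matrix.trace_sum, Finset.sum_mul, Matrix.trace_sum]
    refine Finset.sum_congr rfl fun μ _ => ?_
    have h := Matrix.trace_mul_comm ((Yᴴ * Y) * (K μ * σ)) ((K μ)ᴴ)
    simp only [Matrix.mul_assoc] at h ⊢
    exact h
  have E3 : (((Y*Yᴴ) * (T ρ)).trace) = ((∑ μ, (K μ)ᴴ * Y * Yᴴ * K μ) * ρ).trace := by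
    rw [hTK ρ, Finset.mul_sum, Matrix.trace_sum, Finset.sum_mul, Matrix.trace_sum]
    refine Finset.sum_congr rfl fun μ _ => ?_
    have h := Matrix.trace_mul_comm ((Y * Yᴴ) * (K μ * ρ)) ((K μ)ᴴ)
    simp only [Matrix.mul_assoc] at h ⊢
    exact h
  have E6 : ((Aᴴ * Z).trace) = (Xᴴ * (Z * σ)).trace + (s:ℂ) * ((Xᴴ * (ρ * Z)).trace) := by
    rw [hAH, add_mul, smul_mul_assoc, Matrix.trace_add, Matrix.trace_smul, smul_eq_mul]
    congr 1
    · have h := Matrix.trace_mul_comm σ (Xᴴ * Z)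
      simp only [Matrix.mul_assoc] at h ⊢
      exact h
    · congr 1
      simp only [Matrix.mul_assoc]
  -- conjugate pairs (equal real parts)
  have hc1 : ((Xᴴ * (Z * σ)).trace).re = ((Zᴴ * (X * σ)).trace).re := by
    have h : (Zᴴ * (X * σ))ᴴ = (σ * Xᴴ) * Z := by
      simp [conjTranspose_mul, hσH, Matrix.mul_assoc]
    have h2 : ((σ * Xᴴ) * Z).trace = (Xᴴ * (Z * σ)).trace := by
      have h3 := Matrix.trace_mul_comm σ (Xᴴ * Z)
      simp only [Matrix.mul_assoc] at h3 ⊢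
      exact h3
    rw [← h2, ← h, re_trace_conjT]
  have hc2 : ((Xᴴ * (ρ * Z)).trace).re = ((Zᴴ * (ρ * X)).trace).re := by
    have h : (Zᴴ * (ρ * X))ᴴ = (Xᴴ * ρ) * Z := by
      simp [conjTranspose_mul, hρH, Matrix.mul_assoc]
    have h2 : ((Xᴴ * ρ) * Z).trace = (Xᴴ * (ρ * Z)).trace := by
      simp only [Matrix.mul_assoc]
    rw [← h2, ← h, re_trace_conjT]
  -- expansions of the quadratic form at X - Z
  have E7a : ((((X - Z)ᴴ * (X - Z)) * σ).trace)
      = ((Xᴴ*X)*σ).trace - (Xᴴ*(Z*σ)).trace - (Zᴴ*(X*σ)).trace + ((Zᴴ*Z)*σ).trace := by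
    have h : ((X - Z)ᴴ * (X - Z)) * σ
        = (Xᴴ*X)*σ - Xᴴ*(Z*σ) - Zᴴ*(X*σ) + (Zᴴ*Z)*σ := by
      simp only [conjTranspose_sub]
      noncomm_ring
    rw [h, Matrix.trace_add, Matrix.trace_sub, Matrix.trace_sub]
  have E7b : ((((X - Z) * (X - Z)ᴴ) * ρ).trace)
      = ((X*Xᴴ)*ρ).trace - (Zᴴ*(ρ*X)).trace - (Xᴴ*(ρ*Z)).trace + ((Z*Zᴴ)*ρ).trace := by
    have h : ((X - Z) * (X - Z)ᴴ) * ρ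
        = (X*Xᴴ)*ρ - X*(Zᴴ*ρ) - Z*(Xᴴ*ρ) + (Z*Zᴴ)*ρ := by
      simp only [conjTranspose_sub]
      noncomm_ring
    have c1 : (X*(Zᴴ*ρ)).trace = (Zᴴ*(ρ*X)).trace := by
      have h1 := Matrix.trace_mul_comm X (Zᴴ*ρ)
      simp only [Matrix.mul_assoc] at h1 ⊢
      exact h1
    have c2 : (Z*(Xᴴ*ρ)).trace = (Xᴴ*(ρ*Z)).trace := by
      have h1 := Matrix.trace_mul_comm Z (Xᴴ*ρ)
      simp only [Matrix.mul_assoc] at h1 ⊢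
      exact h1
    rw [h, Matrix.trace_add, Matrix.trace_sub, Matrix.trace_sub, c1, c2]
  -- pass to real parts
  have r1 := congrArg Complex.re E4
  have r2 := congrArg Complex.re E5
  have r3 := congrArg Complex.re E1
  have r4 := congrArg Complex.re E6
  have r7a := congrArg Complex.re E7a
  have r7b := congrArg Complex.re E7b
  simp only [Complex.add_re, Complex.sub_re, Complex.re_ofReal_mul] at r1 r2 r4 r7a r7b
  rw [r7a] at hW1
  rw [r7b] at hW2
  rw [← hc1] at hW1
  rw [← hc2] at hW2
  have hu : 0 ≤ (((Yᴴ*Y) * (T σ)).trace).re - (((Zᴴ * Z) * σ).trace).re := by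
    rw [congrArg Complex.re E2]
    exact hI1
  have hv : 0 ≤ (((Y*Yᴴ) * (T ρ)).trace).re - (((Z * Zᴴ) * ρ).trace).re := by
    rw [congrArg Complex.re E3]
    exact hI2
  nlinarith [r1, r2, r3, r4, hu, hv, hW1, hW2, hs.le,
    mul_nonneg hs.le hW2, mul_nonneg hs.le hv]
end
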